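/- Let Π_1-act be the 1-active policy class. Then for every deterministic MDP M over (S, A) and every layer h ∈ [H], the number of states of S_h reachable by some π ∈ Π_1-act in M is at most h; consequently the spanning capacity satisfies 𝔠(Π_1-act) ≤ 2H. -/
import Mathlib


/-- A deterministic MDP over a layered state space. -/
structure DetMDP (S : ℕ → Type) (A : Type) where
  start : S 0
  step : ∀ h : ℕ, S h → A → S (h + 1)

/-- The trajectory of a policy in a deterministic MDP. -/
def DetMDP.traj {S : ℕ → Type} {A : Type} (M : DetMDP S A) (π : ∀ h : ℕ, S h → A) :
    ∀ h : ℕ, S h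
  | 0 => M.start
  | h + 1 => M.step h (M.traj π h) (π h (M.traj π h))

/-- Reachability of a state-action pair at layer `h` by the class `P` in `M`. -/
def Reachable {S : ℕ → Type} {A : Type} (M : DetMDP S A) (P : Set (∀ h : ℕ, S h → A))
    (h : ℕ) (s : S h) (a : A) : Prop :=
  ∃ π ∈ P, M.traj π h = s ∧ π h s = a

/-- Cumulative reachability at layer `h`. -/
noncomputable def Creach {S : ℕ → Type} {A : Type} (M : DetMDP S A)
    (P : Set (∀ h : ℕ, S h → A)) (h : ℕ) : ℕ :=
  Set.ncard {p : S h × A | Reachable M P h p.1 p.2}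

/-- Spanning capacity of `P` with horizon `H`. -/
noncomputable def spanCap (H : ℕ) (S : ℕ → Type) (A : Type)
    (P : Set (∀ h : ℕ, S h → A)) : ℕ :=
  sSup {n : ℕ | ∃ h < H, ∃ M : DetMDP S A, n = Creach M P h}

/-- The `1`-active policy class over the grid state space with `K + 1` states per layer and
binary actions: for each bit sequence `b`, the policy `π_b` plays `b h` on the
distinguished state `s_(1,h)` (index `0`) of each layer `h` and action `0` (`false`) on
every other state. -/
def oneActiveClass (K : ℕ) : Set (∀ _ : ℕ, Fin (K + 1) → Bool) :=
  {π | ∃ b : ℕ → Bool, π = fun h s => if s = 0 then b h else false}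

lemma oneActive_reach_card {K : ℕ} (M : DetMDP (fun _ => Fin (K + 1)) Bool) (h : ℕ) :
    Set.ncard {s : Fin (K + 1) | ∃ a : Bool, Reachable M (oneActiveClass K) h s a} ≤ h + 1 := by
  induction h with
  | zero =>
    have hsub : {s : Fin (K + 1) | ∃ a : Bool, Reachable M (oneActiveClass K) 0 s a}
        ⊆ {M.start} := by
      rintro s ⟨a, π, hπ, hs, _⟩
      simp only [DetMDP.traj] at hs
      simp [← hs]
    calc _ ≤ ({M.start} : Set (Fin (K + 1))).ncard :=
          Set.ncard_le_ncard hsub (Set.toFinite _)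
      _ = 1 := Set.ncard_singleton _
  | succ h ih =>
    set R := {s : Fin (K + 1) | ∃ a : Bool, Reachable M (oneActiveClass K) h s a} with hR
    have hsub : {s : Fin (K + 1) | ∃ a : Bool, Reachable M (oneActiveClass K) (h + 1) s a}
        ⊆ (fun s => M.step h s false) '' R ∪ {M.step h 0 true} := by
      rintro s ⟨a, π, hπ, hs, _⟩
      have ht : M.traj π h ∈ R := ⟨π h (M.traj π h), π, hπ, rfl, rfl⟩
      obtain ⟨b, rfl⟩ := hπ
      simp only [DetMDP.traj] at hs
      by_cases h0 : M.traj (fun h s => if s = 0 then b h else false) h = 0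
      · rw [h0] at hs ht
        simp only [if_pos rfl] at hs
        cases hb : b h
        · left; exact ⟨0, ht, by simp [← hs, hb]⟩
        · right; simp [← hs, hb]
      · left
        refine ⟨M.traj (fun h s => if s = 0 then b h else false) h, ht, ?_⟩
        rw [← hs, if_neg h0]
    calc _ ≤ ((fun s => M.step h s false) '' R ∪ {M.step h 0 true}).ncard :=
          Set.ncard_le_ncard hsub (Set.toFinite _)
      _ ≤ ((fun s => M.step h s false) '' R).ncard + ({M.step h 0 true} : Set _).ncard :=
          Set.ncard_union_le _ _
      _ ≤ R.ncard + 1 := by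
          rw [Set.ncard_singleton]
          exact Nat.add_le_add_right (Set.ncard_image_le (Set.toFinite _)) 1
      _ ≤ h + 1 + 1 := Nat.add_le_add_right ih 1

/-- For the `1`-active class `Π_1-act`: in every deterministic MDP the number
of states of (`0`-indexed) layer `h` reachable by some policy of the class is at most
`h + 1` (paper: at most `h` for the `1`-indexed layer); consequently
`𝔠(Π_1-act) ≤ 2·H`. -/
theorem oneActive_spanning (K H : ℕ) (hH : 1 ≤ H) :
    (∀ M : DetMDP (fun _ => Fin (K + 1)) Bool, ∀ h < H,
        Set.ncard {s : Fin (K + 1) | ∃ a : Bool, Reachable M (oneActiveClass K) h s a}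
          ≤ h + 1) ∧
      spanCap H (fun _ => Fin (K + 1)) Bool (oneActiveClass K) ≤ 2 * H := by
  constructor
  · intro M h _
    exact oneActive_reach_card M h
  · apply csSup_le
    · exact ⟨Creach (⟨0, fun _ _ _ => 0⟩ : DetMDP (fun _ => Fin (K + 1)) Bool)
        (oneActiveClass K) 0, 0, hH, _, rfl⟩
    · rintro n ⟨h, hhH, M, rfl⟩
      set R := {s : Fin (K + 1) | ∃ a : Bool, Reachable M (oneActiveClass K) h s a} with hR
      have hsub : {p : Fin (K + 1) × Bool | Reachable M (oneActiveClass K) h p.1 p.2}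
          ⊆ (fun s => (s, false)) '' R ∪ (fun s => (s, true)) '' R := by
        rintro ⟨s, a⟩ hp
        have hs : s ∈ R := ⟨a, hp⟩
        cases a
        · left; exact ⟨s, hs, rfl⟩
        · right; exact ⟨s, hs, rfl⟩
      calc Creach M (oneActiveClass K) h
          ≤ ((fun s => (s, false)) '' R ∪ (fun s => (s, true)) '' R).ncard :=
            Set.ncard_le_ncard hsub (Set.toFinite _)
        _ ≤ ((fun s => (s, false)) '' R).ncard + ((fun s => (s, true)) '' R).ncard :=
            Set.ncard_union_le _ _
        _ ≤ R.ncard + R.ncard :=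
            Nat.add_le_add (Set.ncard_image_le (Set.toFinite _))
              (Set.ncard_image_le (Set.toFinite _))
        _ ≤ (h + 1) + (h + 1) :=
            Nat.add_le_add (oneActive_reach_card M h) (oneActive_reach_card M h)
        _ ≤ 2 * H := by omega
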